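/- Let X and Y be complex Banach spaces, A ∈ B(X), B ∈ B(Y), C ∈ B(Y, X), and let M_C ∈ B(X ⊕ Y) be the upper-triangular operator matrix M_C(x, y) = (Ax + Cy, By). Then σ_des(B) ⊆ σ_des(M_C) ⊆ σ_des(A) ∪ σ_des(B); moreover the set W_{σ_des}(A,B,C) := (σ_des(A) ∪ σ_des(B)) \ σ_des(M_C) satisfies W_{σ_des}(A,B,C) ⊆ (σ_des(A) ∩ σ_asc(B)) \ σ_des(B) and W_{σ_des}(A,B,C) ⊆ η(σ_des(B)), where η is the polynomially convex hull, σ_des the descent spectrum and σ_asc the ascent spectrum. -/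

import Mathlib

noncomputable section

open ContinuousLinearMap Metric Set

variable {E : Type*} [NormedAddCommGroup E] [NormedSpace ℂ E]
variable {X Y : Type*} [NormedAddCommGroup X] [NormedSpace ℂ X] [CompleteSpace X]
  [NormedAddCommGroup Y] [NormedSpace ℂ Y] [CompleteSpace Y]

/-- `T` has finite descent: some power has the same range as the next one. -/
def HasFiniteDescent (T : E →L[ℂ] E) : Prop :=
  ∃ k : ℕ, LinearMap.range ((T ^ k : E →L[ℂ] E) : E →ₗ[ℂ] E) = LinearMap.range ((T ^ (k + 1) : E →L[ℂ] E) : E →ₗ[ℂ] E)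

/-- `T` has finite ascent: some power has the same kernel as the next one. -/
def HasFiniteAscent (T : E →L[ℂ] E) : Prop :=
  ∃ k : ℕ, LinearMap.ker ((T ^ k : E →L[ℂ] E) : E →ₗ[ℂ] E) = LinearMap.ker ((T ^ (k + 1) : E →L[ℂ] E) : E →ₗ[ℂ] E)

/-- The descent spectrum. -/
def descentSpectrum (T : E →L[ℂ] E) : Set ℂ :=
  {z | ¬ HasFiniteDescent (T - z • 1)}

/-- The ascent spectrum. -/
def ascentSpectrum (T : E →L[ℂ] E) : Set ℂ :=
  {z | ¬ HasFiniteAscent (T - z • 1)}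

/-- The polynomially convex hull of a set `M ⊆ ℂ`. -/
def polyHull (M : Set ℂ) : Set ℂ :=
  {w | ∀ p : Polynomial ℂ, ∀ m : ℝ, (∀ z ∈ M, ‖p.eval z‖ ≤ m) → ‖p.eval w‖ ≤ m}

/-- The upper-triangular operator matrix `M_C (x, y) = (A x + C y, B y)` on `X ⊕ Y`. -/
def ucMat (A : X →L[ℂ] X) (B : Y →L[ℂ] Y) (C : Y →L[ℂ] X) :
    (X × Y) →L[ℂ] (X × Y) :=
  (A.comp (ContinuousLinearMap.fst ℂ X Y) + C.comp (ContinuousLinearMap.snd ℂ X Y)).prod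
    (B.comp (ContinuousLinearMap.snd ℂ X Y))

set_option linter.unusedSectionVars false

-- power application lemmas
lemma pow_apply_succ (T : E →L[ℂ] E) (n : ℕ) (x : E) : (T ^ (n + 1)) x = (T ^ n) (T x) := by
  rw [pow_succ]; rfl

lemma pow_apply_succ' (T : E →L[ℂ] E) (n : ℕ) (x : E) : (T ^ (n + 1)) x = T ((T ^ n) x) := by
  rw [pow_succ']; rfl

lemma pow_apply_add (T : E →L[ℂ] E) (m k : ℕ) (x : E) :
    (T ^ (m + k)) x = (T ^ m) ((T ^ k) x) := by
  rw [pow_add]; rfl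

lemma range_pow_le (T : E →L[ℂ] E) {m n : ℕ} (h : m ≤ n) :
    LinearMap.range (T ^ n).toLinearMap ≤ LinearMap.range (T ^ m).toLinearMap := by
  obtain ⟨k, rfl⟩ := Nat.exists_eq_add_of_le h
  rintro x ⟨y, rfl⟩
  exact ⟨(T ^ k) y, (pow_apply_add T m k y).symm⟩

lemma ker_pow_le (T : E →L[ℂ] E) {m n : ℕ} (h : m ≤ n) :
    LinearMap.ker (T ^ m).toLinearMap ≤ LinearMap.ker (T ^ n).toLinearMap := by
  obtain ⟨k, rfl⟩ := Nat.exists_eq_add_of_le h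
  intro x hx
  have hx' : (T ^ m) x = 0 := hx
  have : (T ^ (m + k)) x = (T ^ k) ((T ^ m) x) := by
    rw [Nat.add_comm m k]; exact pow_apply_add T k m x
  simp only [LinearMap.mem_ker, ContinuousLinearMap.coe_coe]
  rw [this, hx', map_zero]

lemma range_stab_succ (T : E →L[ℂ] E) {k : ℕ}
    (h : LinearMap.range (T ^ k).toLinearMap = LinearMap.range (T ^ (k + 1)).toLinearMap) :
    ∀ n, k ≤ n → LinearMap.range (T ^ n).toLinearMap = LinearMap.range (T ^ (n + 1)).toLinearMap := by
  intro n hn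
  induction n, hn using Nat.le_induction with
  | base => exact h
  | succ n hn ih =>
    refine le_antisymm ?_ (range_pow_le T (Nat.le_succ _))
    rintro x ⟨y, rfl⟩
    have : (T ^ n) y ∈ LinearMap.range (T ^ (n + 1)).toLinearMap := ih ▸ LinearMap.mem_range_self _ y
    obtain ⟨w, hw⟩ := this
    exact ⟨w, by simp only [ContinuousLinearMap.coe_coe] at hw ⊢; rw [pow_apply_succ' T (n+1) w, hw, ← pow_apply_succ' T n y]⟩

lemma range_stab (T : E →L[ℂ] E) {k : ℕ}
    (h : LinearMap.range (T ^ k).toLinearMap = LinearMap.range (T ^ (k + 1)).toLinearMap) :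
    ∀ n, k ≤ n → LinearMap.range (T ^ n).toLinearMap = LinearMap.range (T ^ k).toLinearMap := by
  intro n hn
  induction n, hn using Nat.le_induction with
  | base => rfl
  | succ n hn ih => rw [← range_stab_succ T h n hn, ih]

lemma ker_stab_succ (T : E →L[ℂ] E) {k : ℕ}
    (h : LinearMap.ker (T ^ k).toLinearMap = LinearMap.ker (T ^ (k + 1)).toLinearMap) :
    ∀ n, k ≤ n → LinearMap.ker (T ^ n).toLinearMap = LinearMap.ker (T ^ (n + 1)).toLinearMap := by
  intro n hn
  induction n, hn using Nat.le_induction with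
  | base => exact h
  | succ n hn ih =>
    refine le_antisymm (ker_pow_le T (Nat.le_succ _)) ?_
    intro x hx
    have h1 : (T ^ (n + 1)) (T x) = 0 := by
      rw [← pow_apply_succ]; exact hx
    have h2 : T x ∈ LinearMap.ker (T ^ n).toLinearMap := ih ▸ h1
    have h3 : (T ^ n) (T x) = 0 := h2
    show (T ^ (n + 1)) x = 0
    rw [pow_apply_succ]; exact h3

lemma ker_stab (T : E →L[ℂ] E) {k : ℕ}
    (h : LinearMap.ker (T ^ k).toLinearMap = LinearMap.ker (T ^ (k + 1)).toLinearMap) :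
    ∀ n, k ≤ n → LinearMap.ker (T ^ n).toLinearMap = LinearMap.ker (T ^ k).toLinearMap := by
  intro n hn
  induction n, hn using Nat.le_induction with
  | base => rfl
  | succ n hn ih => rw [← ker_stab_succ T h n hn, ih]

lemma ucMat_apply (A : X →L[ℂ] X) (B : Y →L[ℂ] Y) (C : Y →L[ℂ] X) (x : X) (y : Y) :
    ucMat A B C (x, y) = (A x + C y, B y) := rfl

def Csum (A : X →L[ℂ] X) (B : Y →L[ℂ] Y) (C : Y →L[ℂ] X) (n : ℕ) : Y →L[ℂ] X :=
  ∑ i ∈ Finset.range n, (A ^ i).comp (C.comp (B ^ (n - 1 - i)))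

lemma Csum_apply (A : X →L[ℂ] X) (B : Y →L[ℂ] Y) (C : Y →L[ℂ] X) (n : ℕ) (y : Y) :
    Csum A B C n y = ∑ i ∈ Finset.range n, (A ^ i) (C ((B ^ (n - 1 - i)) y)) := by
  simp [Csum]

lemma ucMat_pow_apply (A : X →L[ℂ] X) (B : Y →L[ℂ] Y) (C : Y →L[ℂ] X) (n : ℕ) (x : X) (y : Y) :
    ((ucMat A B C) ^ n) (x, y) = ((A ^ n) x + Csum A B C n y, (B ^ n) y) := by
  induction n generalizing x y with
  | zero => simp [Csum]
  | succ n ih =>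
    have h1 : ((ucMat A B C) ^ (n + 1)) (x, y) = ((ucMat A B C) ^ n) (ucMat A B C (x, y)) :=
      pow_apply_succ _ n _
    rw [h1, ucMat_apply, ih]
    refine Prod.ext ?_ ?_
    · show (A ^ n) (A x + C y) + Csum A B C n (B y)
        = (A ^ (n + 1)) x + Csum A B C (n + 1) y
      have hCs : Csum A B C (n + 1) y = ∑ i ∈ Finset.range (n + 1), (A ^ i) (C ((B ^ (n - i)) y)) := by
        rw [Csum_apply]
        exact Finset.sum_congr rfl fun i _ => by norm_num
      have hCs' : Csum A B C n (B y) = ∑ i ∈ Finset.range n, (A ^ i) (C ((B ^ (n - i)) y)) := by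
        rw [Csum_apply]
        refine Finset.sum_congr rfl fun i hi => ?_
        have hi' : i < n := Finset.mem_range.mp hi
        have : n - i = (n - 1 - i) + 1 := by omega
        rw [this, pow_apply_succ]
      rw [hCs, Finset.sum_range_succ, hCs', map_add, pow_apply_succ A n x]
      have : (B ^ (n - n)) y = y := by simp
      rw [this]
      abel
    · show (B ^ n) (B y) = (B ^ (n + 1)) y
      rw [pow_apply_succ]

lemma lem1 {A : X →L[ℂ] X} {B : Y →L[ℂ] Y} {C : Y →L[ℂ] X}
    (hM : HasFiniteDescent (ucMat A B C)) : HasFiniteDescent B := by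
  obtain ⟨k, hk⟩ := hM
  refine ⟨k, le_antisymm ?_ (range_pow_le B (Nat.le_succ k))⟩
  rintro v ⟨y, rfl⟩
  have hmem : ((Csum A B C k y, (B ^ k) y) : X × Y) ∈ LinearMap.range ((ucMat A B C) ^ k).toLinearMap := by
    refine ⟨(0, y), ?_⟩
    rw [ContinuousLinearMap.coe_coe, ucMat_pow_apply]
    simp
  rw [hk] at hmem
  obtain ⟨⟨x', y'⟩, h'⟩ := hmem
  rw [ContinuousLinearMap.coe_coe, ucMat_pow_apply] at h'
  exact ⟨y', congrArg Prod.snd h'⟩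

lemma lem2 {A : X →L[ℂ] X} {B : Y →L[ℂ] Y} (C : Y →L[ℂ] X)
    (hA : HasFiniteDescent A) (hB : HasFiniteDescent B) : HasFiniteDescent (ucMat A B C) := by
  obtain ⟨d, hd⟩ := hA
  obtain ⟨e, he⟩ := hB
  set n := d + e + 1 with hn
  refine ⟨n, le_antisymm ?_ (range_pow_le _ (Nat.le_succ n))⟩
  rintro ⟨u, v⟩ ⟨⟨x, y⟩, hxy⟩
  rw [ContinuousLinearMap.coe_coe, ucMat_pow_apply] at hxy
  have hu : (A ^ n) x + Csum A B C n y = u := congrArg Prod.fst hxy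
  have hv : (B ^ n) y = v := congrArg Prod.snd hxy
  -- choose y'
  have h1 : (B ^ (e + 1)) y ∈ LinearMap.range (B ^ (e + 2)).toLinearMap := by
    have e1 : LinearMap.range (B ^ (e + 1)).toLinearMap = LinearMap.range (B ^ e).toLinearMap :=
      range_stab B he (e + 1) (by omega)
    have e2 : LinearMap.range (B ^ (e + 2)).toLinearMap = LinearMap.range (B ^ e).toLinearMap :=
      range_stab B he (e + 2) (by omega)
    rw [e2, ← e1]
    exact LinearMap.mem_range_self _ y
  obtain ⟨y', hy'⟩ := h1
  have hj : ∀ j, e + 1 ≤ j → (B ^ (j + 1)) y' = (B ^ j) y := by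
    intro j hje
    obtain ⟨t, rfl⟩ := Nat.exists_eq_add_of_le hje
    have l1 : (B ^ (e + 1 + t + 1)) y' = (B ^ t) ((B ^ (e + 2)) y') := by
      have : e + 1 + t + 1 = t + (e + 2) := by omega
      rw [this, pow_apply_add]
    have l2 : (B ^ (e + 1 + t)) y = (B ^ t) ((B ^ (e + 1)) y) := by
      have : e + 1 + t = t + (e + 1) := by omega
      rw [this, pow_apply_add]
    rw [l1, ← ContinuousLinearMap.coe_coe (B ^ (e + 2)), hy', l2]
  -- the target membership
  have hrange : u - Csum A B C (n + 1) y' ∈ LinearMap.range (A ^ (n + 1)).toLinearMap := by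
    have hAd : LinearMap.range (A ^ (n + 1)).toLinearMap = LinearMap.range (A ^ d).toLinearMap :=
      range_stab A hd (n + 1) (by omega)
    rw [hAd]
    have hCs1 : Csum A B C (n + 1) y'
        = ∑ i ∈ Finset.range n, (A ^ i) (C ((B ^ (n - i)) y')) + (A ^ n) (C y') := by
      rw [Csum_apply, Finset.sum_range_succ]
      have h0 : (B ^ (n + 1 - 1 - n)) y' = y' := by norm_num
      rw [h0]
      refine congrArg (· + (A ^ n) (C y')) ?_
      exact Finset.sum_congr rfl fun i _ => by norm_num
    rw [← hu, hCs1, Csum_apply]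
    have key : (A ^ n) x + ∑ i ∈ Finset.range n, (A ^ i) (C ((B ^ (n - 1 - i)) y))
        - (∑ i ∈ Finset.range n, (A ^ i) (C ((B ^ (n - i)) y')) + (A ^ n) (C y'))
        = (A ^ n) x - (A ^ n) (C y')
          + ∑ i ∈ Finset.range n, ((A ^ i) (C ((B ^ (n - 1 - i)) y)) - (A ^ i) (C ((B ^ (n - i)) y'))) := by
      rw [Finset.sum_sub_distrib]; abel
    rw [key]
    have hmem1 : (A ^ n) x ∈ LinearMap.range (A ^ d).toLinearMap :=
      range_pow_le A (by omega) (LinearMap.mem_range_self _ x)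
    have hmem2 : (A ^ n) (C y') ∈ LinearMap.range (A ^ d).toLinearMap :=
      range_pow_le A (by omega) (LinearMap.mem_range_self _ _)
    refine Submodule.add_mem _ (Submodule.sub_mem _ hmem1 hmem2) (Submodule.sum_mem _ ?_)
    intro i hi
    have hi' : i < n := Finset.mem_range.mp hi
    by_cases hid : i < d
    · have heq : (B ^ (n - i)) y' = (B ^ (n - 1 - i)) y := by
        have h2 : n - i = (n - 1 - i) + 1 := by omega
        rw [h2]
        exact hj (n - 1 - i) (by omega)
      rw [heq, sub_self]
      exact Submodule.zero_mem _
    · refine Submodule.sub_mem _ ?_ ?_ <;>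
        exact range_pow_le A (by omega) (LinearMap.mem_range_self _ _)
  obtain ⟨x', hx'⟩ := hrange
  refine ⟨(x', y'), ?_⟩
  rw [ContinuousLinearMap.coe_coe, ucMat_pow_apply]
  refine Prod.ext ?_ ?_
  · show (A ^ (n + 1)) x' + Csum A B C (n + 1) y' = u
    rw [← ContinuousLinearMap.coe_coe (A ^ (n + 1)), hx']; abel
  · show (B ^ (n + 1)) y' = v
    rw [hj n (by omega), hv]

lemma lem3 {A : X →L[ℂ] X} {B : Y →L[ℂ] Y} {C : Y →L[ℂ] X}
    (hM : HasFiniteDescent (ucMat A B C)) (hB : HasFiniteAscent B) : HasFiniteDescent A := by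
  obtain ⟨m, hm⟩ := hM
  obtain ⟨a, ha⟩ := hB
  set N := m + a + 1 with hN
  refine ⟨m, le_antisymm ?_ (range_pow_le _ (Nat.le_succ m))⟩
  rintro u ⟨x, rfl⟩
  have hmem : (((A ^ m) x, (0 : Y)) : X × Y) ∈ LinearMap.range ((ucMat A B C) ^ N).toLinearMap := by
    rw [range_stab (ucMat A B C) hm N (by omega)]
    refine ⟨(x, 0), ?_⟩
    rw [ContinuousLinearMap.coe_coe, ucMat_pow_apply]
    simp
  obtain ⟨⟨x', y'⟩, h'⟩ := hmem
  rw [ContinuousLinearMap.coe_coe, ucMat_pow_apply] at h'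
  have hu' : (A ^ N) x' + Csum A B C N y' = (A ^ m) x := congrArg Prod.fst h'
  have hv' : (B ^ N) y' = 0 := congrArg Prod.snd h'
  have hy'ker : y' ∈ LinearMap.ker (B ^ a).toLinearMap := by
    have : LinearMap.ker (B ^ N).toLinearMap = LinearMap.ker (B ^ a).toLinearMap := ker_stab B ha N (by omega)
    rw [← this]
    exact hv'
  rw [ContinuousLinearMap.coe_coe, ← hu', Csum_apply]
  have hx'mem : (A ^ N) x' ∈ LinearMap.range (A ^ (m + 1)).toLinearMap :=
    range_pow_le A (by omega) (LinearMap.mem_range_self _ _)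
  refine Submodule.add_mem _ hx'mem (Submodule.sum_mem _ ?_)
  intro i hi
  have hi' : i < N := Finset.mem_range.mp hi
  by_cases him : i ≤ m
  · have : (B ^ (N - 1 - i)) y' = 0 := ker_pow_le B (by omega) hy'ker
    rw [this]
    simp
  · exact range_pow_le A (by omega) (LinearMap.mem_range_self _ _)

lemma ucMat_sub_smul (A : X →L[ℂ] X) (B : Y →L[ℂ] Y) (C : Y →L[ℂ] X) (z : ℂ) :
    ucMat A B C - z • 1 = ucMat (A - z • 1) (B - z • 1) C := by
  refine ContinuousLinearMap.ext fun p => ?_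
  obtain ⟨x, y⟩ := p
  have h1 : (ucMat A B C - z • 1) (x, y) = (A x + C y - z • x, B y - z • y) := by
    simp [ucMat_apply, Prod.smul_mk, Prod.mk_sub_mk]
  have h2 : ucMat (A - z • 1) (B - z • 1) C (x, y) = (A x - z • x + C y, B y - z • y) := by
    simp [ucMat_apply]
  rw [h1, h2]
  refine Prod.ext ?_ rfl
  show A x + C y - z • x = A x - z • x + C y
  abel

section Series

variable (P : Y →L[ℂ] Y) (c : ℕ)

lemma phi_surj (hr : LinearMap.range (P ^ (c + 1)).toLinearMap = LinearMap.range (P ^ (c + 2)).toLinearMap)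
    (y : Y) : ∃ x v, v ∈ LinearMap.ker (P ^ (c + 1)).toLinearMap ∧ P x + v = y := by
  have h1 : (P ^ (c + 1)) y ∈ LinearMap.range (P ^ (2 * c + 2)).toLinearMap := by
    rw [range_stab P hr (2 * c + 2) (by omega)]
    exact LinearMap.mem_range_self _ y
  obtain ⟨w, hw⟩ := h1
  refine ⟨(P ^ c) w, y - (P ^ (c + 1)) w, ?_, ?_⟩
  · show (P ^ (c + 1)) (y - (P ^ (c + 1)) w) = 0
    rw [map_sub]
    have : (P ^ (c + 1)) ((P ^ (c + 1)) w) = (P ^ (2 * c + 2)) w := by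
      rw [show 2 * c + 2 = (c + 1) + (c + 1) by omega]
      exact (pow_apply_add P (c + 1) (c + 1) w).symm
    rw [ContinuousLinearMap.coe_coe] at hw; rw [this, hw, sub_self]
  · have : P ((P ^ c) w) = (P ^ (c + 1)) w := (pow_apply_succ' P c w).symm
    rw [this]; abel

lemma series_solve (hr : LinearMap.range (P ^ (c + 1)).toLinearMap = LinearMap.range (P ^ (c + 2)).toLinearMap) :
    ∃ C : ℝ, 0 < C ∧ ∀ z : ℂ, ‖z‖ * C ≤ 1 / 2 → ∀ y : Y,
      ∃ g w, w ∈ LinearMap.ker (P ^ (c + 1)).toLinearMap ∧ (P - z • 1) g = y - w ∧ ‖g‖ ≤ 2 * C * ‖y‖ := by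
  classical
  set V : Submodule ℂ Y := LinearMap.ker (P ^ (c + 1)).toLinearMap with hV
  haveI : CompleteSpace ↥V := (ContinuousLinearMap.isClosed_ker (P ^ (c + 1))).completeSpace_coe
  set Φ : (Y × ↥V) →L[ℂ] Y :=
    P.comp (ContinuousLinearMap.fst ℂ Y ↥V) + V.subtypeL.comp (ContinuousLinearMap.snd ℂ Y ↥V)
    with hΦ
  have hΦap : ∀ q : Y × ↥V, Φ q = P q.1 + (q.2 : Y) := fun q => rfl
  have hsurj : Function.Surjective Φ := by
    intro y
    obtain ⟨x, v, hv, hxv⟩ := phi_surj P c hr y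
    exact ⟨(x, ⟨v, hv⟩), by rw [hΦap]; exact hxv⟩
  obtain ⟨C, hCpos, hC⟩ := Φ.exists_preimage_norm_le hsurj
  refine ⟨C, hCpos, ?_⟩
  intro z hz y
  set r : ℝ := ‖z‖ * C with hrdef
  have hr0 : 0 ≤ r := mul_nonneg (norm_nonneg _) hCpos.le
  have hr1 : r < 1 := lt_of_le_of_lt hz (by norm_num)
  -- the choice function
  have hF : ∀ u : Y, ∃ q : Y × ↥V, Φ q = u ∧ ‖q‖ ≤ C * ‖u‖ := hC
  set F : Y → Y × ↥V := fun u => (hF u).choose with hFdef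
  have hF1 : ∀ u, Φ (F u) = u := fun u => (hF u).choose_spec.1
  have hF2 : ∀ u, ‖F u‖ ≤ C * ‖u‖ := fun u => (hF u).choose_spec.2
  -- the sequence
  set xs : ℕ → Y := fun n => Nat.rec (motive := fun _ => Y) y (fun _ p => (F p).1) n with hxs
  have hxs0 : xs 0 = y := rfl
  have hxssucc : ∀ n, xs (n + 1) = (F (xs n)).1 := fun n => rfl
  set vs : ℕ → Y := fun n => ((F (xs n)).2 : Y) with hvs
  have hvsmem : ∀ n, vs n ∈ V := fun n => (F (xs n)).2.2
  have hPx : ∀ n, P (xs (n + 1)) = xs n - vs n := by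
    intro n
    have := hF1 (xs n)
    rw [hΦap] at this
    rw [hxssucc]
    rw [hvs]
    exact eq_sub_of_add_eq this
  have hxsn : ∀ n, ‖xs n‖ ≤ C ^ n * ‖y‖ := by
    intro n
    induction n with
    | zero => simp [hxs0]
    | succ n ih =>
      have h1 : ‖xs (n + 1)‖ ≤ C * ‖xs n‖ := by
        rw [hxssucc]
        exact le_trans (norm_fst_le (F (xs n))) (hF2 (xs n))
      calc ‖xs (n + 1)‖ ≤ C * ‖xs n‖ := h1
        _ ≤ C * (C ^ n * ‖y‖) := by
            exact mul_le_mul_of_nonneg_left ih hCpos.le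
        _ = C ^ (n + 1) * ‖y‖ := by ring
  have hvsn : ∀ n, ‖vs n‖ ≤ C ^ (n + 1) * ‖y‖ := by
    intro n
    have h1 : ‖vs n‖ ≤ C * ‖xs n‖ := by
      rw [hvs]
      exact le_trans (norm_snd_le (F (xs n))) (hF2 (xs n))
    calc ‖vs n‖ ≤ C * ‖xs n‖ := h1
      _ ≤ C * (C ^ n * ‖y‖) := mul_le_mul_of_nonneg_left (hxsn n) hCpos.le
      _ = C ^ (n + 1) * ‖y‖ := by ring
  -- summability
  have geom : Summable fun n : ℕ => r ^ n := summable_geometric_of_lt_one hr0 hr1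
  have hban : ∀ n : ℕ, ‖z ^ n • xs (n + 1)‖ ≤ C * ‖y‖ * r ^ n := by
    intro n
    rw [norm_smul, norm_pow]
    calc ‖z‖ ^ n * ‖xs (n + 1)‖ ≤ ‖z‖ ^ n * (C ^ (n + 1) * ‖y‖) :=
          mul_le_mul_of_nonneg_left (hxsn (n + 1)) (by positivity)
      _ = C * ‖y‖ * r ^ n := by rw [hrdef, mul_pow]; ring
  have hban' : ∀ n : ℕ, ‖z ^ n • xs n‖ ≤ ‖y‖ * r ^ n := by
    intro n
    rw [norm_smul, norm_pow]
    calc ‖z‖ ^ n * ‖xs n‖ ≤ ‖z‖ ^ n * (C ^ n * ‖y‖) :=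
          mul_le_mul_of_nonneg_left (hxsn n) (by positivity)
      _ = ‖y‖ * r ^ n := by rw [hrdef, mul_pow]; ring
  have hbbn : ∀ n : ℕ, ‖z ^ n • vs n‖ ≤ C * ‖y‖ * r ^ n := by
    intro n
    rw [norm_smul, norm_pow]
    calc ‖z‖ ^ n * ‖vs n‖ ≤ ‖z‖ ^ n * (C ^ (n + 1) * ‖y‖) :=
          mul_le_mul_of_nonneg_left (hvsn n) (by positivity)
      _ = C * ‖y‖ * r ^ n := by rw [hrdef, mul_pow]; ring
  have Sa : Summable fun n : ℕ => z ^ n • xs (n + 1) :=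
    Summable.of_norm_bounded (geom.mul_left (C * ‖y‖)) hban
  have Sa' : Summable fun n : ℕ => z ^ n • xs n :=
    Summable.of_norm_bounded (geom.mul_left ‖y‖) hban'
  have Sb : Summable fun n : ℕ => z ^ n • vs n :=
    Summable.of_norm_bounded (geom.mul_left (C * ‖y‖)) hbbn
  set g : Y := ∑' n, z ^ n • xs (n + 1) with hg
  set w : Y := ∑' n, z ^ n • vs n with hw
  have hwV : w ∈ V := by
    refine (ContinuousLinearMap.isClosed_ker (P ^ (c + 1))).mem_of_tendsto
      Sb.hasSum.tendsto_sum_nat (Filter.Eventually.of_forall fun n => ?_)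
    exact Submodule.sum_mem _ fun i _ => Submodule.smul_mem _ _ (hvsmem i)
  have hPg : P g = y + z • g - w := by
    have h1 : P g = ∑' n, (z ^ n • xs n - z ^ n • vs n) := by
      rw [hg, P.map_tsum Sa]
      congr 1
      funext n
      rw [P.map_smul, hPx n, smul_sub]
    have h2 : (∑' n, (z ^ n • xs n - z ^ n • vs n)) = (∑' n, z ^ n • xs n) - w :=
      Summable.tsum_sub Sa' Sb
    have h3 : (∑' n, z ^ n • xs n) = y + z • g := by
      rw [Summable.tsum_eq_zero_add Sa']
      congr 1
      · simp [hxs0]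
      · rw [hg, ← tsum_const_smul'' z]
        congr 1
        funext n
        rw [smul_smul, ← pow_succ']
    rw [h1, h2, h3]
  refine ⟨g, w, hwV, ?_, ?_⟩
  · have : (P - z • 1) g = P g - z • g := by
      simp [ContinuousLinearMap.sub_apply, ContinuousLinearMap.smul_apply]
    rw [this, hPg]; abel
  · have hnorm : ‖g‖ ≤ ∑' n, (C * ‖y‖ * r ^ n) := by
      refine le_trans (norm_tsum_le_tsum_norm ?_) ?_
      · exact Summable.of_nonneg_of_le (fun n => norm_nonneg _) hban (geom.mul_left _)
      · exact Summable.tsum_le_tsum hban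
          (Summable.of_nonneg_of_le (fun n => norm_nonneg _) hban (geom.mul_left _))
          (geom.mul_left _)
    have hge : (∑' n : ℕ, (C * ‖y‖ * r ^ n)) = C * ‖y‖ * (1 - r)⁻¹ := by
      rw [tsum_mul_left, tsum_geometric_of_lt_one hr0 hr1]
    have hinv : (1 - r)⁻¹ ≤ 2 := by
      have h12 : (1 : ℝ) / 2 ≤ 1 - r := by linarith
      calc (1 - r)⁻¹ ≤ ((1:ℝ)/2)⁻¹ := by
            exact inv_anti₀ (by norm_num) h12
        _ = 2 := by norm_num
    calc ‖g‖ ≤ C * ‖y‖ * (1 - r)⁻¹ := by rw [← hge]; exact hnorm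
      _ ≤ C * ‖y‖ * 2 := mul_le_mul_of_nonneg_left hinv (by positivity)
      _ = 2 * C * ‖y‖ := by ring

end Series

section AlphaBeta

lemma eigen_pow (P : Y →L[ℂ] Y) {z : ℂ} {x : Y} (h : P x = z • x) (n : ℕ) :
    (P ^ n) x = z ^ n • x := by
  induction n with
  | zero => simp
  | succ n ih => rw [pow_apply_succ' P n x, ih, map_smul, h, smul_smul, ← pow_succ]

lemma unit_inv_apply (P : Y →L[ℂ] Y) (z : ℂ) (hu : IsUnit (P - z • 1)) (w : Y) :
    (↑hu.unit⁻¹ : Y →L[ℂ] Y) ((P - z • 1) w) = w := by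
  have h2 : (↑hu.unit : Y →L[ℂ] Y) w = (P - z • 1) w := by rw [IsUnit.unit_spec]
  calc (↑hu.unit⁻¹ : Y →L[ℂ] Y) ((P - z • 1) w)
      = (↑hu.unit⁻¹ : Y →L[ℂ] Y) ((↑hu.unit : Y →L[ℂ] Y) w) := by rw [h2]
    _ = ((↑hu.unit⁻¹ * ↑hu.unit : Y →L[ℂ] Y)) w := rfl
    _ = ((1 : Y →L[ℂ] Y)) w := by rw [Units.inv_mul]
    _ = w := rfl

lemma unit_inv_comm (P : Y →L[ℂ] Y) (z : ℂ) (hu : IsUnit (P - z • 1)) (n : ℕ) (w : Y) :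
    (P ^ n) ((↑hu.unit⁻¹ : Y →L[ℂ] Y) w) = (↑hu.unit⁻¹ : Y →L[ℂ] Y) ((P ^ n) w) := by
  have hc : Commute P (P - z • 1) :=
    (Commute.refl P).sub_right (Commute.smul_right (Commute.one_right P) z)
  have hcu : Commute P (↑hu.unit : Y →L[ℂ] Y) := by rw [IsUnit.unit_spec]; exact hc
  have hcq : Commute (P ^ n) (↑hu.unit⁻¹ : Y →L[ℂ] Y) := (hcu.units_inv_right).pow_left n
  have := congrArg (fun (T : Y →L[ℂ] Y) => T w) hcq.eq
  simpa [ContinuousLinearMap.mul_apply] using this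

lemma unit_inv_ker_mem (P : Y →L[ℂ] Y) (z : ℂ) (hu : IsUnit (P - z • 1)) (n : ℕ) {w : Y}
    (hw : w ∈ LinearMap.ker (P ^ n).toLinearMap) :
    (↑hu.unit⁻¹ : Y →L[ℂ] Y) w ∈ LinearMap.ker (P ^ n).toLinearMap := by
  have hw0 : (P ^ n) w = 0 := hw
  show (P ^ n) ((↑hu.unit⁻¹ : Y →L[ℂ] Y) w) = 0
  rw [unit_inv_comm P z hu n w, hw0, map_zero]

lemma alpha (P : Y →L[ℂ] Y) (hd : HasFiniteDescent P)
    (hacc : ∀ ε : ℝ, 0 < ε → ∃ z : ℂ, ‖z‖ < ε ∧ IsUnit (P - z • 1)) :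
    HasFiniteAscent P := by
  obtain ⟨k, hk⟩ := hd
  have hr : LinearMap.range (P ^ (k + 1)).toLinearMap = LinearMap.range (P ^ (k + 2)).toLinearMap :=
    range_stab_succ P hk (k + 1) (by omega)
  obtain ⟨C, hCpos, hser⟩ := series_solve P k hr
  refine ⟨k + 1, le_antisymm (ker_pow_le P (by omega)) ?_⟩
  intro x₀ hx₀
  have hPx₀ : P x₀ ∈ LinearMap.ker (P ^ (k + 1)).toLinearMap := by
    show (P ^ (k + 1)) (P x₀) = 0
    rw [← pow_apply_succ]; exact hx₀
  have hclosed : IsClosed ((LinearMap.ker (P ^ (k + 1)).toLinearMap : Submodule ℂ Y) : Set Y) :=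
    ContinuousLinearMap.isClosed_ker _
  have hmem : x₀ ∈ closure ((LinearMap.ker (P ^ (k + 1)).toLinearMap : Submodule ℂ Y) : Set Y) := by
    rw [Metric.mem_closure_iff]
    intro ε hε
    obtain ⟨z, hzlt, hzu⟩ :=
      hacc (min (ε / (2 * C * ‖x₀‖ + 1)) (1 / (2 * C))) (by positivity)
    have hz2 : ‖z‖ < 1 / (2 * C) := lt_of_lt_of_le hzlt (min_le_right _ _)
    have hz1 : ‖z‖ * C ≤ 1 / 2 := by
      have h := mul_lt_mul_of_pos_right hz2 hCpos
      have heq : 1 / (2 * C) * C = 1 / 2 := by field_simp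
      rw [heq] at h
      exact h.le
    obtain ⟨g, w, hwV, hgw, hgnorm⟩ := hser z hz1 x₀
    set h := x₀ + z • g with hh
    have hPh : (P - z • 1) h ∈ LinearMap.ker (P ^ (k + 1)).toLinearMap := by
      have heq : (P - z • 1) h = P x₀ - z • w := by
        rw [hh, map_add, (P - z • 1).map_smul, hgw]
        have h2 : (P - z • 1) x₀ = P x₀ - z • x₀ := by simp
        rw [h2, smul_sub]; abel
      rw [heq]
      exact Submodule.sub_mem _ hPx₀ (Submodule.smul_mem _ _ hwV)
    have hhV : h ∈ LinearMap.ker (P ^ (k + 1)).toLinearMap := by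
      have h3 : h = (↑hzu.unit⁻¹ : Y →L[ℂ] Y) ((P - z • 1) h) :=
        (unit_inv_apply P z hzu h).symm
      rw [h3]
      exact unit_inv_ker_mem P z hzu (k + 1) hPh
    refine ⟨h, hhV, ?_⟩
    rw [dist_eq_norm]
    have h4 : x₀ - h = -(z • g) := by rw [hh]; abel
    rw [h4, norm_neg, norm_smul]
    have h5 : ‖g‖ ≤ 2 * C * ‖x₀‖ := hgnorm
    have hz3 : ‖z‖ < ε / (2 * C * ‖x₀‖ + 1) := lt_of_lt_of_le hzlt (min_le_left _ _)
    calc ‖z‖ * ‖g‖ ≤ ‖z‖ * (2 * C * ‖x₀‖ + 1) := by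
          refine mul_le_mul_of_nonneg_left ?_ (norm_nonneg _)
          linarith
      _ < ε / (2 * C * ‖x₀‖ + 1) * (2 * C * ‖x₀‖ + 1) := by
          refine mul_lt_mul_of_pos_right hz3 (by positivity)
      _ = ε := by field_simp
  exact hclosed.closure_subset hmem

lemma omt_solve (P : Y →L[ℂ] Y) (c : ℕ)
    (hr : LinearMap.range (P ^ (c + 1)).toLinearMap = LinearMap.range (P ^ (c + 2)).toLinearMap) :
    ∃ C : ℝ, 0 < C ∧ ∀ y : Y, ∃ x v, v ∈ LinearMap.ker (P ^ (c + 1)).toLinearMap ∧ P x + v = y ∧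
      ‖x‖ ≤ C * ‖y‖ := by
  classical
  set V : Submodule ℂ Y := LinearMap.ker (P ^ (c + 1)).toLinearMap with hV
  haveI : CompleteSpace ↥V := (ContinuousLinearMap.isClosed_ker (P ^ (c + 1))).completeSpace_coe
  set Φ : (Y × ↥V) →L[ℂ] Y :=
    P.comp (ContinuousLinearMap.fst ℂ Y ↥V) + V.subtypeL.comp (ContinuousLinearMap.snd ℂ Y ↥V)
    with hΦ
  have hΦap : ∀ q : Y × ↥V, Φ q = P q.1 + (q.2 : Y) := fun q => rfl
  have hsurj : Function.Surjective Φ := by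
    intro y
    obtain ⟨x, v, hv, hxv⟩ := phi_surj P c hr y
    exact ⟨(x, ⟨v, hv⟩), by rw [hΦap]; exact hxv⟩
  obtain ⟨C, hCpos, hC⟩ := Φ.exists_preimage_norm_le hsurj
  refine ⟨C, hCpos, fun y => ?_⟩
  obtain ⟨q, hq, hqn⟩ := hC y
  refine ⟨q.1, (q.2 : Y), q.2.2, by rw [← hΦap]; exact hq, ?_⟩
  exact le_trans (norm_fst_le q) hqn

lemma beta (P : Y →L[ℂ] Y) (hd : HasFiniteDescent P) (ha : HasFiniteAscent P) :
    ∃ ε : ℝ, 0 < ε ∧ ∀ z : ℂ, z ≠ 0 → ‖z‖ < ε → IsUnit (P - z • 1) := by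
  obtain ⟨k₁, hk₁⟩ := hd
  obtain ⟨k₂, hk₂⟩ := ha
  set c := k₁ + k₂ with hc
  have hr : LinearMap.range (P ^ (c + 1)).toLinearMap = LinearMap.range (P ^ (c + 2)).toLinearMap :=
    range_stab_succ P hk₁ (c + 1) (by omega)
  have hker : LinearMap.ker (P ^ (c + 1)).toLinearMap = LinearMap.ker (P ^ (c + 2)).toLinearMap :=
    ker_stab_succ P hk₂ (c + 1) (by omega)
  obtain ⟨C, hCpos, hser⟩ := series_solve P c hr
  obtain ⟨C', hC'pos, homt⟩ := omt_solve P c hr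
  set V : Submodule ℂ Y := LinearMap.ker (P ^ (c + 1)).toLinearMap with hV
  have hVne : ((V : Set Y)).Nonempty := ⟨0, Submodule.zero_mem V⟩
  refine ⟨min (1 / (2 * C)) (1 / (2 * C')), lt_min (by positivity) (by positivity), ?_⟩
  intro z hz0 hzlt
  have hzC : ‖z‖ * C ≤ 1 / 2 := by
    have h1 : ‖z‖ < 1 / (2 * C) := lt_of_lt_of_le hzlt (min_le_left _ _)
    have h := mul_lt_mul_of_pos_right h1 hCpos
    have heq : 1 / (2 * C) * C = 1 / 2 := by field_simp
    rw [heq] at h; exact h.le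
  have hzC' : C' * ‖z‖ ≤ 1 / 2 := by
    have h1 : ‖z‖ < 1 / (2 * C') := lt_of_lt_of_le hzlt (min_le_right _ _)
    have h := mul_lt_mul_of_pos_right h1 hC'pos
    have heq : 1 / (2 * C') * C' = 1 / 2 := by field_simp
    rw [heq] at h; linarith [h]
  -- injectivity
  have hinj : ∀ x : Y, (P - z • 1) x = 0 → x = 0 := by
    intro x hx
    have hx' : P x - z • x = 0 := by simpa using hx
    have hPx : P x = z • x := sub_eq_zero.mp hx'
    have hz0' : (0 : ℝ) < ‖z‖ := norm_pos_iff.mpr hz0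
    have hstep1 : Metric.infDist x (V : Set Y) ≤ C' * Metric.infDist (P x) (V : Set Y) := by
      refine le_of_forall_pos_le_add fun δ hδ => ?_
      have hlt : Metric.infDist (P x) (V : Set Y) <
          Metric.infDist (P x) (V : Set Y) + δ / C' := by
        have : (0:ℝ) < δ / C' := by positivity
        linarith
      obtain ⟨w, hwV, hwd⟩ := (Metric.infDist_lt_iff hVne).1 hlt
      obtain ⟨x₁, v₁, hv₁, hxv₁, hx₁n⟩ := homt (P x - w)
      have hPx2 : P x₁ + v₁ + w = P x := eq_sub_iff_add_eq.mp hxv₁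
      have hsub : x - x₁ ∈ V := by
        have hPsub : P (x - x₁) = v₁ + w := by
          rw [map_sub, ← hPx2]; abel
        have hmem2 : x - x₁ ∈ LinearMap.ker (P ^ (c + 2)).toLinearMap := by
          show (P ^ (c + 2)) (x - x₁) = 0
          rw [pow_apply_succ P (c + 1) (x - x₁), hPsub, map_add]
          have h1 : (P ^ (c + 1)) v₁ = 0 := hv₁
          have h2 : (P ^ (c + 1)) w = 0 := hwV
          rw [h1, h2, add_zero]
        show x - x₁ ∈ V
        rw [hker]
        exact hmem2
      have h6 : Metric.infDist x (V : Set Y) ≤ ‖x₁‖ := by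
        have hd6 : dist x (x - x₁) = ‖x₁‖ := by
          rw [dist_eq_norm]
          congr 1
          abel
        rw [← hd6]
        exact Metric.infDist_le_dist_of_mem hsub
      calc Metric.infDist x (V : Set Y) ≤ ‖x₁‖ := h6
        _ ≤ C' * ‖P x - w‖ := hx₁n
        _ = C' * dist (P x) w := by rw [dist_eq_norm]
        _ ≤ C' * (Metric.infDist (P x) (V : Set Y) + δ / C') :=
            mul_le_mul_of_nonneg_left hwd.le hC'pos.le
        _ = C' * Metric.infDist (P x) (V : Set Y) + δ := by
            rw [mul_add, mul_div_cancel₀ _ (ne_of_gt hC'pos)]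
    have hstep2 : Metric.infDist (P x) (V : Set Y) ≤ ‖z‖ * Metric.infDist x (V : Set Y) := by
      refine le_of_forall_pos_le_add fun δ hδ => ?_
      have hlt : Metric.infDist x (V : Set Y) < Metric.infDist x (V : Set Y) + δ / ‖z‖ := by
        have : (0:ℝ) < δ / ‖z‖ := by positivity
        linarith
      obtain ⟨w, hwV, hwd⟩ := (Metric.infDist_lt_iff hVne).1 hlt
      have hzw : z • w ∈ V := Submodule.smul_mem _ _ hwV
      calc Metric.infDist (P x) (V : Set Y) ≤ dist (P x) (z • w) :=
            Metric.infDist_le_dist_of_mem hzw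
        _ = ‖z‖ * dist x w := by
            rw [hPx, dist_eq_norm, dist_eq_norm, ← smul_sub, norm_smul]
        _ ≤ ‖z‖ * (Metric.infDist x (V : Set Y) + δ / ‖z‖) :=
            mul_le_mul_of_nonneg_left hwd.le (norm_nonneg z)
        _ = ‖z‖ * Metric.infDist x (V : Set Y) + δ := by
            rw [mul_add, mul_div_cancel₀ _ (ne_of_gt hz0')]
    have hid0 : Metric.infDist x (V : Set Y) = 0 := by
      have h7 : Metric.infDist x (V : Set Y) ≤ C' * (‖z‖ * Metric.infDist x (V : Set Y)) :=
        le_trans hstep1 (mul_le_mul_of_nonneg_left hstep2 hC'pos.le)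
      have h8 : C' * (‖z‖ * Metric.infDist x (V : Set Y)) ≤
          1 / 2 * Metric.infDist x (V : Set Y) := by
        rw [← mul_assoc]
        exact mul_le_mul_of_nonneg_right hzC' Metric.infDist_nonneg
      have h9 := Metric.infDist_nonneg (s := (V : Set Y)) (x := x)
      linarith
    have hclosed' : IsClosed (V : Set Y) := ContinuousLinearMap.isClosed_ker _
    have hxV : x ∈ V :=
      hclosed'.closure_subset ((Metric.mem_closure_iff_infDist_zero hVne).2 hid0)
    have h10 : (P ^ (c + 1)) x = z ^ (c + 1) • x := eigen_pow P hPx (c + 1)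
    have h11 : (P ^ (c + 1)) x = 0 := hxV
    rw [h10] at h11
    rcases smul_eq_zero.mp h11 with h | h
    · exact absurd h (pow_ne_zero _ hz0)
    · exact h
  -- surjectivity
  have hsurj : Function.Surjective ⇑(P - z • 1) := by
    intro y
    obtain ⟨g, w, hwV, hgw, -⟩ := hser z hzC y
    set f : ℕ → Y := fun j => (z⁻¹) ^ j • (P ^ j) w with hf
    set corr : Y := ∑ j ∈ Finset.range (c + 1), (z⁻¹) ^ (j + 1) • (P ^ j) w with hcorr
    have hPcorr : (P - z • 1) corr = -w := by
      have hterm : ∀ j, (P - z • 1) ((z⁻¹) ^ (j + 1) • (P ^ j) w) = f (j + 1) - f j := by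
        intro j
        have e1 : (P - z • 1) ((z⁻¹) ^ (j + 1) • (P ^ j) w)
            = (z⁻¹) ^ (j + 1) • P ((P ^ j) w) - z • ((z⁻¹) ^ (j + 1) • (P ^ j) w) := by
          simp only [ContinuousLinearMap.sub_apply, ContinuousLinearMap.smul_apply,
            ContinuousLinearMap.one_apply, map_smul]
          rw [smul_sub, smul_comm]
        rw [e1, ← pow_apply_succ' P j w]
        have e2 : z • ((z⁻¹) ^ (j + 1) • (P ^ j) w) = (z⁻¹) ^ j • (P ^ j) w := by
          rw [smul_smul, pow_succ]
          congr 1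
          rw [mul_comm (z⁻¹ ^ j) z⁻¹, ← mul_assoc, mul_inv_cancel₀ hz0, one_mul]
        rw [e2]
      rw [hcorr, map_sum, Finset.sum_congr rfl fun j _ => hterm j,
        Finset.sum_range_sub f (c + 1)]
      have hfc : f (c + 1) = 0 := by
        have hw0 : (P ^ (c + 1)) w = 0 := hwV
        simp only [hf, hw0, smul_zero]
      have hf0 : f 0 = w := by simp [hf]
      rw [hfc, hf0, zero_sub]
    refine ⟨g - corr, ?_⟩
    rw [map_sub, hgw, hPcorr]
    abel
  have hker0 : LinearMap.ker (P - z • 1).toLinearMap = ⊥ := LinearMap.ker_eq_bot'.mpr hinj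
  have hrange : LinearMap.range (P - z • 1).toLinearMap = ⊤ := LinearMap.range_eq_top.mpr hsurj
  set e := ContinuousLinearEquiv.ofBijective (P - z • 1) hker0 hrange with he
  refine ⟨⟨P - z • 1, (e.symm : Y →L[ℂ] Y), ?_, ?_⟩, rfl⟩
  · refine ContinuousLinearMap.ext fun u => ?_
    show (P - z • 1) ((e.symm : Y →L[ℂ] Y) u) = u
    exact ContinuousLinearEquiv.ofBijective_apply_symm_apply (P - z • 1) hker0 hrange u
  · refine ContinuousLinearMap.ext fun u => ?_
    show (e.symm : Y →L[ℂ] Y) ((P - z • 1) u) = u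
    exact ContinuousLinearEquiv.ofBijective_symm_apply_apply (P - z • 1) hker0 hrange u

end AlphaBeta

lemma shift_sub_smul (T : Y →L[ℂ] Y) (z w : ℂ) :
    T - z • 1 - (w - z) • 1 = T - w • 1 := by
  rw [sub_sub, ← add_smul]
  congr 2
  ring

lemma ascent_of_not_mem_polyHull (T : Y →L[ℂ] Y) {l : ℂ}
    (h : l ∉ polyHull (descentSpectrum T)) : HasFiniteAscent (T - l • 1) := by
  simp only [polyHull, Set.mem_setOf_eq, not_forall] at h
  obtain ⟨p, m, hpm, hpl⟩ := h
  have hpl' : m < ‖Polynomial.eval l p‖ := lt_of_not_ge hpl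
  set Ω : Set ℂ := {w | m < ‖Polynomial.eval w p‖} with hΩ
  have hΩo : IsOpen Ω := isOpen_lt continuous_const (p.differentiable.continuous.norm)
  have hlΩ : l ∈ Ω := hpl'
  have hΩdes : ∀ w ∈ Ω, HasFiniteDescent (T - w • 1) := by
    intro w hw
    by_contra hcon
    have h1 : w ∈ descentSpectrum T := hcon
    exact absurd (hpm w h1) (not_le.mpr hw)
  set U := connectedComponentIn Ω l with hU
  have hlU : l ∈ U := mem_connectedComponentIn hlΩ
  have hUo : IsOpen U := hΩo.connectedComponentIn
  have hUpre : IsPreconnected U := isPreconnected_connectedComponentIn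
  have hUΩ : U ⊆ Ω := connectedComponentIn_subset _ _
  have hfr : ∀ x ∈ frontier U, ‖Polynomial.eval x p‖ ≤ m := by
    intro x hx
    by_contra hgt
    have hxΩ : x ∈ Ω := lt_of_not_ge hgt
    have hxcl : x ∈ closure U := frontier_subset_closure hx
    have hxnU : x ∉ U := by
      rw [hUo.frontier_eq] at hx
      exact hx.2
    obtain ⟨r, hr0, hball⟩ := Metric.isOpen_iff.1 hΩo x hxΩ
    obtain ⟨u, huU, hud⟩ := Metric.mem_closure_iff.1 hxcl r hr0
    have huball : u ∈ Metric.ball x r := by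
      rw [Metric.mem_ball, dist_comm]
      exact hud
    have hbc : Metric.ball x r ⊆ connectedComponentIn Ω u :=
      (convex_ball x r).isPreconnected.subset_connectedComponentIn huball hball
    have heq : connectedComponentIn Ω u = U := by
      rw [hU]
      exact (connectedComponentIn_eq (huU : u ∈ connectedComponentIn Ω l)).symm
    rw [heq] at hbc
    exact hxnU (hbc (Metric.mem_ball_self hr0))
  have hUnb : ¬ Bornology.IsBounded U := by
    intro hb
    have := Complex.norm_le_of_forall_mem_frontier_norm_le hb
      (p.differentiable.diffContOnCl) hfr (subset_closure hlU)
    exact absurd this (not_le.mpr hpl')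
  obtain ⟨z₁, hz₁U, hz₁n⟩ : ∃ z₁ ∈ U, ‖T‖ < ‖z₁‖ := by
    by_contra hcon
    push_neg at hcon
    refine hUnb ((Metric.isBounded_iff_subset_closedBall 0).2 ⟨‖T‖, fun w hw => ?_⟩)
    rw [Metric.mem_closedBall, dist_zero_right]
    exact hcon w hw
  set ρ : Set ℂ := {w | IsUnit (T - w • 1)} with hρ
  have hz₁ρ : z₁ ∈ ρ := by
    show IsUnit (T - z₁ • 1)
    have hz₁0 : z₁ ≠ 0 := by
      intro h0
      rw [h0, norm_zero] at hz₁n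
      exact absurd (norm_nonneg T) (not_le.mpr hz₁n)
    have hnorm : ‖z₁⁻¹ • T‖ < 1 := by
      have hns : ‖z₁⁻¹ • T‖ = ‖z₁⁻¹‖ * ‖T‖ := by exact norm_smul z₁⁻¹ T
      rw [hns, norm_inv, inv_mul_eq_div]
      exact (div_lt_one (lt_of_le_of_lt (norm_nonneg T) hz₁n)).2 hz₁n
    set u := Units.oneSub (z₁⁻¹ • T) hnorm with hudef
    have huval : (u : Y →L[ℂ] Y) = 1 - z₁⁻¹ • T := rfl
    have heq : T - z₁ • 1 = (-z₁) • (u : Y →L[ℂ] Y) := by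
      rw [huval]
      have h1 : (-z₁ : ℂ) * z₁⁻¹ = -1 := by field_simp
      rw [smul_sub, smul_smul, h1, neg_smul z₁ (1 : Y →L[ℂ] Y), neg_one_smul, sub_neg_eq_add]
      abel
    rw [heq]
    refine ⟨⟨(-z₁) • (u : Y →L[ℂ] Y), (-z₁)⁻¹ • ((u⁻¹ : (Y →L[ℂ] Y)ˣ) : Y →L[ℂ] Y), ?_, ?_⟩, rfl⟩
    · rw [smul_mul_smul_comm, mul_inv_cancel₀ (neg_ne_zero.2 hz₁0), u.mul_inv, one_smul]
    · rw [smul_mul_smul_comm, inv_mul_cancel₀ (neg_ne_zero.2 hz₁0), u.inv_mul, one_smul]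
  have hkey : ∀ w : ℂ, w ∈ U → w ∈ closure ρ → HasFiniteAscent (T - w • 1) ∧
      ∃ e : ℝ, 0 < e ∧ Metric.ball w e ⊆ closure ρ := by
    intro w hwU hwcl
    have hfdP : HasFiniteDescent (T - w • 1) := hΩdes w (hUΩ hwU)
    have hacc : ∀ ε : ℝ, 0 < ε → ∃ z : ℂ, ‖z‖ < ε ∧ IsUnit ((T - w • 1) - z • 1) := by
      intro ε hε
      obtain ⟨v, hvρ, hvd⟩ := Metric.mem_closure_iff.1 hwcl ε hε
      refine ⟨v - w, ?_, ?_⟩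
      · rw [← dist_eq_norm, dist_comm]
        exact hvd
      · rw [shift_sub_smul T w v]
        exact hvρ
    have hfa := alpha (T - w • 1) hfdP hacc
    obtain ⟨e, he0, hpunct⟩ := beta (T - w • 1) hfdP hfa
    refine ⟨hfa, e, he0, ?_⟩
    intro v hv
    by_cases hvw : v = w
    · rw [hvw]; exact hwcl
    · refine subset_closure ?_
      show IsUnit (T - v • 1)
      rw [← shift_sub_smul T w v]
      refine hpunct (v - w) (sub_ne_zero.mpr hvw) ?_
      rw [← dist_eq_norm]
      exact Metric.mem_ball.1 hv
  have hkey2 : ∀ w : ℂ, w ∈ U ∩ closure ρ → ∃ e : ℝ, 0 < e ∧ Metric.ball w e ⊆ closure ρ :=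
    fun w hw => (hkey w hw.1 hw.2).2
  choose! rad hrad0 hradsub using hkey2
  set O : Set ℂ := ⋃ (w : ℂ) (_ : w ∈ U ∩ closure ρ), Metric.ball w (rad w) with hO
  have hOopen : IsOpen O := isOpen_iUnion fun w => isOpen_iUnion fun _ => Metric.isOpen_ball
  have hOsub : O ⊆ closure ρ := by
    intro v hv
    simp only [hO, Set.mem_iUnion] at hv
    obtain ⟨w, hw, hvball⟩ := hv
    exact hradsub w hw hvball
  have hUcl : U ⊆ closure ρ := by
    by_contra hcon
    obtain ⟨w₀, hw₀U, hw₀⟩ := not_subset.1 hcon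
    have hcover : U ⊆ O ∪ (closure ρ)ᶜ := by
      intro v hv
      by_cases hvc : v ∈ closure ρ
      · exact Or.inl (Set.mem_iUnion.2 ⟨v, Set.mem_iUnion.2
          ⟨⟨hv, hvc⟩, Metric.mem_ball_self (hrad0 v ⟨hv, hvc⟩)⟩⟩)
      · exact Or.inr hvc
    have hne1 : (U ∩ O).Nonempty := by
      refine ⟨z₁, hz₁U, Set.mem_iUnion.2 ⟨z₁, Set.mem_iUnion.2
        ⟨⟨hz₁U, subset_closure hz₁ρ⟩, Metric.mem_ball_self (hrad0 z₁ ⟨hz₁U, subset_closure hz₁ρ⟩)⟩⟩⟩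
    have hne2 : (U ∩ (closure ρ)ᶜ).Nonempty := ⟨w₀, hw₀U, hw₀⟩
    obtain ⟨v, hvU, hvO, hvc⟩ := hUpre O (closure ρ)ᶜ hOopen
      isClosed_closure.isOpen_compl hcover hne1 hne2
    exact hvc (hOsub hvO)
  exact (hkey l hlU (hUcl hlU)).1

theorem stmt18 (A : X →L[ℂ] X) (B : Y →L[ℂ] Y) (C : Y →L[ℂ] X) :
    descentSpectrum B ⊆ descentSpectrum (ucMat A B C) ∧
      descentSpectrum (ucMat A B C) ⊆ descentSpectrum A ∪ descentSpectrum B ∧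
      (descentSpectrum A ∪ descentSpectrum B) \ descentSpectrum (ucMat A B C) ⊆
        (descentSpectrum A ∩ ascentSpectrum B) \ descentSpectrum B ∧
      (descentSpectrum A ∪ descentSpectrum B) \ descentSpectrum (ucMat A B C) ⊆
        polyHull (descentSpectrum B) := by
  have g1 : descentSpectrum B ⊆ descentSpectrum (ucMat A B C) := by
    intro z hz hM
    rw [ucMat_sub_smul] at hM
    exact hz (lem1 hM)
  have gM : ∀ z : ℂ, z ∉ descentSpectrum (ucMat A B C) →
      HasFiniteDescent (ucMat (A - z • 1) (B - z • 1) C) := by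
    intro z hz
    have h1 : HasFiniteDescent (ucMat A B C - z • 1) := not_not.1 hz
    rwa [ucMat_sub_smul] at h1
  refine ⟨g1, ?_, ?_, ?_⟩
  · intro z hz
    by_contra hcon
    rw [Set.mem_union, not_or] at hcon
    have hA' : HasFiniteDescent (A - z • 1) := not_not.1 hcon.1
    have hB' : HasFiniteDescent (B - z • 1) := not_not.1 hcon.2
    exact hz (by rw [ucMat_sub_smul]; exact lem2 C hA' hB')
  · rintro z ⟨hzu, hzM⟩
    have hM' := gM z hzM
    have hzB : z ∉ descentSpectrum B := fun hB => hzM (g1 hB)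
    have hzA : z ∈ descentSpectrum A := hzu.resolve_right hzB
    have hzasc : z ∈ ascentSpectrum B := by
      intro hfa
      exact hzA (lem3 hM' hfa)
    exact ⟨⟨hzA, hzasc⟩, hzB⟩
  · rintro z ⟨hzu, hzM⟩
    intro p mm hp
    by_contra hgt
    have hnm : z ∉ polyHull (descentSpectrum B) := fun hmem => hgt (hmem p mm hp)
    have hfa : HasFiniteAscent (B - z • 1) := ascent_of_not_mem_polyHull B hnm
    have hM' := gM z hzM
    have hzA : z ∉ descentSpectrum A := fun h => h (lem3 hM' hfa)
    have hzB : z ∉ descentSpectrum B := fun hB => hzM (g1 hB)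
    exact hzu.elim hzA hzB
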